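/- arXiv:2002.04876 — 3 statements merged into one kernel-verified Lean document; each statement's English description precedes it below -/
import Mathlib

section
/- For φ ≥ 0 and v ≥ 0, the polynomial Q(φ, v) = 2v³ + (18φ - 4sin(2φ))v² + 8cos²(φ)v + 6(3φ - 2sin(2φ) + 2φcos(2φ)) is non-negative, with equality only when φ = 0 and v = 0. -/
open Real

lemma f_eq (φ : ℝ) : 3 * φ - 2 * Real.sin (2 * φ) + 2 * φ * Real.cos (2 * φ)
    = φ * (1 + 4 * Real.cos φ ^ 2) - 4 * Real.sin φ * Real.cos φ := by
  rw [Real.sin_two_mul, Real.cos_two_mul]; ring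

lemma f_pos {φ : ℝ} (hφ : 0 < φ) :
    0 < 3 * φ - 2 * Real.sin (2 * φ) + 2 * φ * Real.cos (2 * φ) := by
  rw [f_eq]
  set s := Real.sin φ
  set c := Real.cos φ
  have hsc : s ^ 2 + c ^ 2 = 1 := Real.sin_sq_add_cos_sq φ
  rcases le_or_gt 1 φ with h1 | h1
  · rcases eq_or_ne c 0 with hc | hc
    · rw [hc]; nlinarith [hsc]
    · have hc2 : 0 < c ^ 2 := by positivity
      nlinarith [sq_nonneg (s - 2 * c), sq_nonneg c]
  · have hs : s < φ := Real.sin_lt hφ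
    have hc : 0 < c := Real.cos_pos_of_mem_Ioo ⟨by linarith [Real.pi_gt_three], by
      linarith [Real.pi_gt_three]⟩
    nlinarith [mul_nonneg hφ.le (sq_nonneg (1 - 2 * c)), mul_pos hc (sub_pos.mpr hs)]

lemma coef2_nonneg {φ : ℝ} (hφ : 0 ≤ φ) : 0 ≤ 18 * φ - 4 * Real.sin (2 * φ) := by
  have := Real.sin_le (by linarith : 0 ≤ 2 * φ)
  linarith

lemma f_nonneg {φ : ℝ} (hφ : 0 ≤ φ) :
    0 ≤ 3 * φ - 2 * Real.sin (2 * φ) + 2 * φ * Real.cos (2 * φ) := by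
  rcases eq_or_lt_of_le hφ with h | h
  · simp [← h]
  · exact (f_pos h).le

theorem stmt_14 (φ v : ℝ) (hφ : 0 ≤ φ) (hv : 0 ≤ v) :
    0 ≤ 2 * v ^ 3 + (18 * φ - 4 * Real.sin (2 * φ)) * v ^ 2 + 8 * Real.cos φ ^ 2 * v +
        6 * (3 * φ - 2 * Real.sin (2 * φ) + 2 * φ * Real.cos (2 * φ)) ∧
    (2 * v ^ 3 + (18 * φ - 4 * Real.sin (2 * φ)) * v ^ 2 + 8 * Real.cos φ ^ 2 * v +
        6 * (3 * φ - 2 * Real.sin (2 * φ) + 2 * φ * Real.cos (2 * φ)) = 0 ↔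
      φ = 0 ∧ v = 0) := by
  have h1 : 0 ≤ 2 * v ^ 3 := by positivity
  have h2 : 0 ≤ (18 * φ - 4 * Real.sin (2 * φ)) * v ^ 2 :=
    mul_nonneg (coef2_nonneg hφ) (sq_nonneg v)
  have h3 : 0 ≤ 8 * Real.cos φ ^ 2 * v := by positivity
  have h4 : 0 ≤ 6 * (3 * φ - 2 * Real.sin (2 * φ) + 2 * φ * Real.cos (2 * φ)) := by
    linarith [f_nonneg hφ]
  constructor
  · linarith
  · constructor
    · intro h
      have hφ0 : φ = 0 := by
        by_contra hne
        have := f_pos (lt_of_le_of_ne hφ (Ne.symm hne))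
        linarith
      have hv0 : v = 0 := by
        have hv3 : 2 * v ^ 3 = 0 := by linarith
        have : v ^ 3 = 0 := by linarith
        exact pow_eq_zero_iff (by norm_num) |>.mp this
      exact ⟨hφ0, hv0⟩
    · rintro ⟨rfl, rfl⟩
      norm_num
end

section
/- The function h(φ) = 3φ - 2sin(2φ) + 2φcos(2φ) satisfies h(φ) > 0 for all φ > 0. -/
theorem stmt_15 (φ : ℝ) (hφ : 0 < φ) :
    0 < 3 * φ - 2 * Real.sin (2 * φ) + 2 * φ * Real.cos (2 * φ) := by
  rw [Real.sin_two_mul, Real.cos_two_mul']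
  set s := Real.sin φ with hs
  set c := Real.cos φ with hc
  have hsc : s ^ 2 + c ^ 2 = 1 := Real.sin_sq_add_cos_sq φ
  rcases lt_or_ge φ (Real.pi / 2) with h1 | h1
  · -- 0 < φ < π/2
    have hslt : s < φ := Real.sin_lt hφ
    have hspos : 0 < s := Real.sin_pos_of_pos_of_lt_pi hφ
      (h1.trans_le (by linarith [Real.pi_pos]))
    have hcpos : 0 < c := Real.cos_pos_of_mem_Ioo ⟨by linarith [Real.pi_pos], h1⟩
    nlinarith [mul_pos (sub_pos.mpr hslt) hcpos, sq_nonneg (1 - 2 * c),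
      mul_nonneg hφ.le (sq_nonneg (1 - 2 * c))]
  · rcases lt_or_ge φ Real.pi with h2 | h2
    · -- π/2 ≤ φ < π
      have hs0 : 0 ≤ s := Real.sin_nonneg_of_nonneg_of_le_pi hφ.le h2.le
      have hc0 : c ≤ 0 := Real.cos_nonpos_of_pi_div_two_le_of_le h1
        (by linarith [Real.pi_pos])
      nlinarith [sq_nonneg s, sq_nonneg c]
    · -- φ ≥ π
      have h3 : s * c ≤ 1 := by nlinarith [sq_nonneg (s - c)]
      have h4 : -1 ≤ 1 - 2 * s ^ 2 := by nlinarith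
      have hp : 3 < Real.pi := Real.pi_gt_three
      nlinarith
end

section
/- Let φ be a C⁴ solution of the d = 5 biharmonic ODE on [s₀, s₁], set ξ = φ'' - 3φ, and suppose φ(s₀), φ'(s₀), ξ(s₀), ξ'(s₀) are all non-negative. Then φ(s), φ'(s), ξ(s), ξ'(s) are all non-negative for s ∈ [s₀, s₁]; moreover if one of them is positive at s₀, then all four are strictly positive on (s₀, s₁]. -/
open Real

/-- The `d = 5` autonomous biharmonic ODE. -/
def SolvesBiharmODE5 (φ : ℝ → ℝ) (S : Set ℝ) : Prop :=
  ∀ s ∈ S, iteratedDeriv 4 φ s =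
    (4 * cos (2 * φ s) + 9) * iteratedDeriv 2 φ s - 12 * sin (2 * φ s)
      + (6 * iteratedDeriv 2 φ s - 4 * sin (2 * φ s)) * (deriv φ s) ^ 2
      + (4 * cos (2 * φ s) + 10) * deriv φ s
      + 2 * (deriv φ s) ^ 3
      - 2 * iteratedDeriv 3 φ s

section BihAux
open Set Filter Topology
set_option maxHeartbeats 1000000

lemma pos_of_deriv {f g : ℝ → ℝ} (hd : ∀ y, HasDerivAt f (g y) y) (h0 : f 0 = 0)
    (hg : ∀ y, 0 < y → 0 ≤ g y) {x : ℝ} (hx : 0 ≤ x) : 0 ≤ f x := by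
  have hmono : MonotoneOn f (Ici 0) := by
    apply monotoneOn_of_deriv_nonneg (convex_Ici 0)
    · exact fun y _ => (hd y).differentiableAt.continuousAt.continuousWithinAt
    · exact fun y hy => ((hd y).differentiableAt).differentiableWithinAt
    · intro y hy
      rw [interior_Ici] at hy
      rw [(hd y).deriv]
      exact hg y hy
  have := hmono Set.self_mem_Ici (hx : x ∈ Ici 0) hx
  linarith [h0 ▸ this]

private lemma hp (n : ℕ) (c y : ℝ) : HasDerivAt (fun t : ℝ => t^n/c) (n*y^(n-1)/c) y :=
  (hasDerivAt_pow n y).div_const c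

lemma cos_ge2 (x : ℝ) (hx : 0 ≤ x) : 1 - x^2/2 ≤ cos x := by
  have := pos_of_deriv (f := fun y => cos y - (1 - y^2/2)) (g := fun y => y - sin y)
    (fun y => ((Real.hasDerivAt_cos y).sub ((hp 2 2 y).const_sub 1)).congr_deriv (by push_cast; ring))
    (by norm_num) (fun y hy => by linarith [Real.sin_le hy.le]) hx
  linarith

lemma sin_ge3 (x : ℝ) (hx : 0 ≤ x) : x - x^3/6 ≤ sin x := by
  have := pos_of_deriv (f := fun y => sin y - (y - y^3/6)) (g := fun y => cos y - (1 - y^2/2))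
    (fun y => ((Real.hasDerivAt_sin y).sub ((hasDerivAt_id y).sub (hp 3 6 y))).congr_deriv (by push_cast; ring))
    (by norm_num) (fun y hy => by linarith [cos_ge2 y hy.le]) hx
  linarith

lemma cos_le4 (x : ℝ) (hx : 0 ≤ x) : cos x ≤ 1 - x^2/2 + x^4/24 := by
  have := pos_of_deriv (f := fun y => 1 - y^2/2 + y^4/24 - cos y)
    (g := fun y => sin y - (y - y^3/6))
    (fun y => ((((hp 2 2 y).const_sub 1).add (hp 4 24 y)).sub (Real.hasDerivAt_cos y)).congr_deriv (by push_cast; ring))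
    (by norm_num) (fun y hy => by linarith [sin_ge3 y hy.le]) hx
  linarith

lemma sin_le5 (x : ℝ) (hx : 0 ≤ x) : sin x ≤ x - x^3/6 + x^5/120 := by
  have := pos_of_deriv (f := fun y => y - y^3/6 + y^5/120 - sin y)
    (g := fun y => 1 - y^2/2 + y^4/24 - cos y)
    (fun y => ((((hasDerivAt_id y).sub (hp 3 6 y)).add (hp 5 120 y)).sub (Real.hasDerivAt_sin y)).congr_deriv (by push_cast; ring))
    (by norm_num) (fun y hy => by linarith [cos_le4 y hy.le]) hx
  linarith

lemma cos_ge6 (x : ℝ) (hx : 0 ≤ x) : 1 - x^2/2 + x^4/24 - x^6/720 ≤ cos x := by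
  have := pos_of_deriv (f := fun y => cos y - (1 - y^2/2 + y^4/24 - y^6/720))
    (g := fun y => y - y^3/6 + y^5/120 - sin y)
    (fun y => ((Real.hasDerivAt_cos y).sub ((((hp 2 2 y).const_sub 1).add (hp 4 24 y)).sub (hp 6 720 y))).congr_deriv (by push_cast; ring))
    (by norm_num) (fun y hy => by linarith [sin_le5 y hy.le]) hx
  linarith

lemma sin_ge7 (x : ℝ) (hx : 0 ≤ x) : x - x^3/6 + x^5/120 - x^7/5040 ≤ sin x := by
  have := pos_of_deriv (f := fun y => sin y - (y - y^3/6 + y^5/120 - y^7/5040))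
    (g := fun y => cos y - (1 - y^2/2 + y^4/24 - y^6/720))
    (fun y => ((Real.hasDerivAt_sin y).sub ((((hasDerivAt_id y).sub (hp 3 6 y)).add (hp 5 120 y)).sub (hp 7 5040 y))).congr_deriv (by push_cast; ring))
    (by norm_num) (fun y hy => by linarith [cos_ge6 y hy.le]) hx
  linarith

lemma cos_le8 (x : ℝ) (hx : 0 ≤ x) : cos x ≤ 1 - x^2/2 + x^4/24 - x^6/720 + x^8/40320 := by
  have := pos_of_deriv (f := fun y => 1 - y^2/2 + y^4/24 - y^6/720 + y^8/40320 - cos y)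
    (g := fun y => sin y - (y - y^3/6 + y^5/120 - y^7/5040))
    (fun y => ((((((hp 2 2 y).const_sub 1).add (hp 4 24 y)).sub (hp 6 720 y)).add (hp 8 40320 y)).sub (Real.hasDerivAt_cos y)).congr_deriv (by push_cast; ring))
    (by norm_num) (fun y hy => by linarith [sin_ge7 y hy.le]) hx
  linarith

lemma sin_le9 (x : ℝ) (hx : 0 ≤ x) : sin x ≤ x - x^3/6 + x^5/120 - x^7/5040 + x^9/362880 := by
  have := pos_of_deriv (f := fun y => y - y^3/6 + y^5/120 - y^7/5040 + y^9/362880 - sin y)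
    (g := fun y => 1 - y^2/2 + y^4/24 - y^6/720 + y^8/40320 - cos y)
    (fun y => ((((((hasDerivAt_id y).sub (hp 3 6 y)).add (hp 5 120 y)).sub (hp 7 5040 y)).add (hp 9 362880 y)).sub (Real.hasDerivAt_sin y)).congr_deriv (by push_cast; ring))
    (by norm_num) (fun y hy => by linarith [cos_le8 y hy.le]) hx
  linarith

lemma cos_ge10 (x : ℝ) (hx : 0 ≤ x) :
    1 - x^2/2 + x^4/24 - x^6/720 + x^8/40320 - x^10/3628800 ≤ cos x := by
  have := pos_of_deriv
    (f := fun y => cos y - (1 - y^2/2 + y^4/24 - y^6/720 + y^8/40320 - y^10/3628800))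
    (g := fun y => y - y^3/6 + y^5/120 - y^7/5040 + y^9/362880 - sin y)
    (fun y => ((Real.hasDerivAt_cos y).sub ((((((hp 2 2 y).const_sub 1).add (hp 4 24 y)).sub (hp 6 720 y)).add (hp 8 40320 y)).sub (hp 10 3628800 y))).congr_deriv (by push_cast; ring))
    (by norm_num) (fun y hy => by linarith [sin_le9 y hy.le]) hx
  linarith

lemma q_bound (u : ℝ) (h0 : 0 ≤ u) (h25 : u ≤ 25) :
    1/8 ≤ 1/2 - u/6 + u^2/40 - u^3/1008 + u^4/51840 - u^5/3628800 := by
  nlinarith [sq_nonneg (u-4), sq_nonneg (u-10), sq_nonneg u, mul_nonneg h0 (sq_nonneg (u-4)), mul_nonneg (mul_nonneg h0 h0) (sq_nonneg (u-4)), mul_nonneg (sub_nonneg.2 h25) (sq_nonneg (u-4)), mul_nonneg (mul_nonneg h0 (sub_nonneg.2 h25)) (sq_nonneg (u-4)), mul_nonneg (mul_nonneg (sub_nonneg.2 h25) (sub_nonneg.2 h25)) (sq_nonneg (u-4))]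

lemma h_ge (y : ℝ) (h0 : 0 ≤ y) (h5 : y ≤ 5) :
    y/8 ≤ 3/2*y - 2*sin y + y*cos y := by
  have hs := sin_le9 y h0
  have hc := cos_ge10 y h0
  have hq := q_bound (y^2) (sq_nonneg y) (by nlinarith)
  have hyc : y * (1 - y^2/2 + y^4/24 - y^6/720 + y^8/40320 - y^10/3628800) ≤ y*cos y :=
    mul_le_mul_of_nonneg_left hc h0
  nlinarith [mul_le_mul_of_nonneg_left hq h0]

lemma g_nonneg (x : ℝ) (hx : 0 ≤ x) : 0 ≤ 3*x - 2*sin (2*x) + 2*x*cos (2*x) := by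
  rcases le_or_gt (2*x) 5 with h | h
  · have := h_ge (2*x) (by linarith) h
    linarith
  · have h1 := Real.sin_le_one (2*x)
    have h2 := Real.neg_one_le_cos (2*x)
    nlinarith
lemma g_pos (x : ℝ) (hx : 0 < x) : 0 < 3*x - 2*sin (2*x) + 2*x*cos (2*x) := by
  rcases le_or_gt (2*x) 5 with h | h
  · have := h_ge (2*x) (by linarith) h
    linarith
  · have h1 := Real.sin_le_one (2*x)
    have h2 := Real.neg_one_le_cos (2*x)
    nlinarith

noncomputable def Qf (p w : ℝ) : ℝ :=
  2*w^3 + (18*p - 4*sin (2*p))*w^2 + 8*(cos p)^2*w + 6*(3*p - 2*sin (2*p) + 2*p*cos (2*p))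

lemma Qf_nonneg {p w : ℝ} (hp : 0 ≤ p) (hw : 0 ≤ w) : 0 ≤ Qf p w := by
  unfold Qf
  have h1 := Real.sin_le (by linarith : (0:ℝ) ≤ 2*p)
  have h2 := g_nonneg p hp
  have h3 : (0:ℝ) ≤ (cos p)^2 := sq_nonneg _
  nlinarith [pow_nonneg hw 3, sq_nonneg w, mul_nonneg hp (sq_nonneg w)]

lemma Qf_pos {p w : ℝ} (hp : 0 ≤ p) (hw : 0 ≤ w) (h : 0 < p ∨ 0 < w) : 0 < Qf p w := by
  unfold Qf
  have h1 := Real.sin_le (by linarith : (0:ℝ) ≤ 2*p)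
  have h3 : (0:ℝ) ≤ (cos p)^2 := sq_nonneg _
  rcases h with h | h
  · have h2 := g_pos p h
    nlinarith [pow_nonneg hw 3, mul_nonneg h3 hw, mul_nonneg hp (sq_nonneg w)]
  · have h2 := g_nonneg p hp
    nlinarith [pow_pos h 3, mul_nonneg h3 hw, mul_nonneg hp (sq_nonneg w)]

lemma Qf_lower {M δ p w : ℝ} (hM : 1 ≤ M) (hδ0 : 0 ≤ δ) (hδM : δ ≤ M)
    (hpM : |p| ≤ M) (hwM : |w| ≤ M) (hp : -δ ≤ p) (hw : -δ ≤ w) :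
    -(90*M^2*δ) ≤ Qf p w := by
  have hpM' := abs_le.1 hpM
  have hwM' := abs_le.1 hwM
  have hcos : (cos p)^2 ≤ 1 := Real.cos_sq_le_one p
  have hcos0 : (0:ℝ) ≤ (cos p)^2 := sq_nonneg _
  have ht1 : -(2*M^2*δ) ≤ 2*w^3 := by
    rcases le_or_gt 0 w with h | h
    · nlinarith [pow_nonneg h 3]
    · have k1 : 0 ≤ (w+δ)*((w - δ/2)^2 + 3*δ^2/4) :=
        mul_nonneg (by linarith) (by positivity)
      have k2 : 0 ≤ δ*(M^2 - δ^2) := mul_nonneg hδ0 (by nlinarith)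
      nlinarith [k1, k2]
  have ht3 : -(8*δ) ≤ 8*(cos p)^2*w := by
    rcases le_or_gt 0 w with h | h
    · nlinarith
    · nlinarith
  have ht2 : -(26*M^2*δ) ≤ (18*p - 4*sin (2*p))*w^2 := by
    rcases le_or_gt 0 p with h | h
    · have h1 := Real.sin_le (by linarith : (0:ℝ) ≤ 2*p)
      nlinarith [sq_nonneg w, mul_nonneg h (sq_nonneg w)]
    · have h1 : sin (2*p) ≤ 2*δ := by
        have := Real.abs_sin_le_abs (x := 2*p)
        have : |sin (2*p)| ≤ 2*δ := le_trans this (by rw [abs_of_nonpos (by linarith)]; linarith)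
        linarith [le_abs_self (sin (2*p))]
      have hco : -(26*δ) ≤ 18*p - 4*sin (2*p) := by linarith
      have hw2 : w^2 ≤ M^2 := by nlinarith
      rcases le_or_gt 0 (18*p - 4*sin (2*p)) with h2 | h2
      · nlinarith [sq_nonneg w]
      · nlinarith [sq_nonneg w]
  have ht4 : -(54*δ) ≤ 6*(3*p - 2*sin (2*p) + 2*p*cos (2*p)) := by
    rcases le_or_gt 0 p with h | h
    · linarith [g_nonneg p h]
    · have h1 : sin (2*p) ≤ 2*δ := by
        have h2 := Real.abs_sin_le_abs (x := 2*p)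
        have : |sin (2*p)| ≤ 2*δ := le_trans h2 (by rw [abs_of_nonpos (by linarith)]; linarith)
        linarith [le_abs_self (sin (2*p))]
      have h3 : p*cos (2*p) ≥ p := by nlinarith [Real.cos_le_one (2*p), Real.neg_one_le_cos (2*p)]
      linarith
  have k3 : 0 ≤ δ*(M^2 - 1) := mul_nonneg hδ0 (by nlinarith)
  unfold Qf
  nlinarith [k3]

lemma orthant (s₀ s₁ : ℝ) (hs : s₀ < s₁) (p v ξ η : ℝ → ℝ)
    (hcp : Continuous p) (hcv : Continuous v) (hcξ : Continuous ξ) (hcη : Continuous η)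
    (hdp : ∀ s, HasDerivAt p (v s) s)
    (hdv : ∀ s, HasDerivAt v (3 * p s + ξ s) s)
    (hdξ : ∀ s, HasDerivAt ξ (η s) s)
    (hdη : ∀ s ∈ Icc s₀ s₁, HasDerivAt η
      ((6*(v s)^2 + 4*cos (2*p s) + 6) * ξ s - 2*η s + Qf (p s) (v s)) s)
    (h1 : 0 ≤ p s₀) (h2 : 0 ≤ v s₀) (h3 : 0 ≤ ξ s₀) (h4 : 0 ≤ η s₀) :
    ∀ s ∈ Icc s₀ s₁, 0 ≤ p s ∧ 0 ≤ v s ∧ 0 ≤ ξ s ∧ 0 ≤ η s := by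
  obtain ⟨M, hM1, hMb⟩ : ∃ M, 1 ≤ M ∧ ∀ s ∈ Icc s₀ s₁,
      |p s| ≤ M ∧ |v s| ≤ M ∧ |ξ s| ≤ M ∧ |η s| ≤ M := by
    obtain ⟨C1, hC1⟩ := isCompact_Icc.exists_bound_of_continuousOn (hcp.continuousOn (s := Icc s₀ s₁))
    obtain ⟨C2, hC2⟩ := isCompact_Icc.exists_bound_of_continuousOn (hcv.continuousOn (s := Icc s₀ s₁))
    obtain ⟨C3, hC3⟩ := isCompact_Icc.exists_bound_of_continuousOn (hcξ.continuousOn (s := Icc s₀ s₁))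
    obtain ⟨C4, hC4⟩ := isCompact_Icc.exists_bound_of_continuousOn (hcη.continuousOn (s := Icc s₀ s₁))
    refine ⟨max (max (max C1 C2) (max C3 C4)) 1, le_max_right _ _, fun s hsm => ?_⟩
    have e1 := hC1 s hsm; have e2 := hC2 s hsm; have e3 := hC3 s hsm; have e4 := hC4 s hsm
    simp only [Real.norm_eq_abs] at e1 e2 e3 e4
    refine ⟨?_, ?_, ?_, ?_⟩ <;>
      [exact le_trans e1 (le_max_of_le_left (by simp [le_max_iff]));
       exact le_trans e2 (le_max_of_le_left (by simp [le_max_iff]));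
       exact le_trans e3 (le_max_of_le_left (by simp [le_max_iff]));
       exact le_trans e4 (le_max_of_le_left (by simp [le_max_iff]))]
  set K : ℝ := 100*M^2 + 100 with hK
  have hKpos : 0 < K := by nlinarith
  have hEc : Continuous (fun s : ℝ => exp (K*(s-s₀))) := by fun_prop
  have hEd : ∀ (ε : ℝ) (t : ℝ), HasDerivAt (fun s => ε * exp (K*(s-s₀)))
      (ε * (K * exp (K*(t-s₀)))) t := by
    intro ε t
    have h1 : HasDerivAt (fun s : ℝ => K*(s-s₀)) K t := by
      simpa using (((hasDerivAt_id t).sub_const s₀).const_mul K)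
    exact (((Real.hasDerivAt_exp _).comp t h1).const_mul ε).congr_deriv (by ring)
  have key : ∀ ε : ℝ, 0 < ε → ∀ s ∈ Icc s₀ s₁,
      0 < p s + ε * exp (K*(s-s₀)) ∧ 0 < v s + ε * exp (K*(s-s₀)) ∧
      0 < ξ s + ε * exp (K*(s-s₀)) ∧ 0 < η s + ε * exp (K*(s-s₀)) := by
    intro ε hε
    by_contra hcon
    push_neg at hcon
    set E : ℝ → ℝ := fun s => ε * exp (K*(s-s₀)) with hE
    have hEpos : ∀ s, 0 < E s := fun s => mul_pos hε (exp_pos _)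
    set B : Set ℝ := {s | s ∈ Icc s₀ s₁ ∧
      (p s + E s ≤ 0 ∨ v s + E s ≤ 0 ∨ ξ s + E s ≤ 0 ∨ η s + E s ≤ 0)} with hBdef
    have hBne : B.Nonempty := by
      obtain ⟨s, hsm, hbad⟩ := hcon
      refine ⟨s, hsm, ?_⟩
      by_contra hall
      push_neg at hall
      exact absurd (hbad hall.1 hall.2.1 hall.2.2.1) (not_le.2 hall.2.2.2)
    have hEcont : Continuous E := continuous_const.mul hEc
    have hBclosed : IsClosed B := by
      have c1 : IsClosed {s : ℝ | p s + E s ≤ 0} :=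
        isClosed_le (hcp.add hEcont) continuous_const
      have c2 : IsClosed {s : ℝ | v s + E s ≤ 0} :=
        isClosed_le (hcv.add hEcont) continuous_const
      have c3 : IsClosed {s : ℝ | ξ s + E s ≤ 0} :=
        isClosed_le (hcξ.add hEcont) continuous_const
      have c4 : IsClosed {s : ℝ | η s + E s ≤ 0} :=
        isClosed_le (hcη.add hEcont) continuous_const
      have : B = Icc s₀ s₁ ∩ ({s : ℝ | p s + E s ≤ 0} ∪ ({s : ℝ | v s + E s ≤ 0} ∪
          ({s : ℝ | ξ s + E s ≤ 0} ∪ {s : ℝ | η s + E s ≤ 0}))) := by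
        ext x; simp [hBdef, and_assoc]
      rw [this]
      exact isClosed_Icc.inter (c1.union (c2.union (c3.union c4)))
    have hBbdd : BddBelow B := ⟨s₀, fun x hx => hx.1.1⟩
    set t := sInf B with ht
    have htB : t ∈ B := hBclosed.csInf_mem hBne hBbdd
    have ht01 : t ∈ Icc s₀ s₁ := htB.1
    have hEs₀ : E s₀ = ε := by simp [hE]
    have hs₀pos : 0 < p s₀ + E s₀ ∧ 0 < v s₀ + E s₀ ∧ 0 < ξ s₀ + E s₀ ∧ 0 < η s₀ + E s₀ := by
      rw [hEs₀]; exact ⟨by linarith, by linarith, by linarith, by linarith⟩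
    have hs₀t : s₀ < t := by
      rcases lt_or_eq_of_le ht01.1 with h | h
      · exact h
      · exfalso
        have h2' := htB.2
        rw [← h] at h2'
        rcases h2' with h' | h' | h' | h' <;>
          linarith [hs₀pos.1, hs₀pos.2.1, hs₀pos.2.2.1, hs₀pos.2.2.2]
    have hlow : ∀ s ∈ Ico s₀ t, 0 < p s + E s ∧ 0 < v s + E s ∧ 0 < ξ s + E s ∧ 0 < η s + E s := by
      intro s hsm
      have hnotB : s ∉ B := fun hmem => absurd (csInf_le hBbdd hmem) (not_le.2 hsm.2)
      have hsIcc : s ∈ Icc s₀ s₁ := ⟨hsm.1, le_trans hsm.2.le ht01.2⟩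
      have hd : ¬(p s + E s ≤ 0 ∨ v s + E s ≤ 0 ∨ ξ s + E s ≤ 0 ∨ η s + E s ≤ 0) :=
        fun hd => hnotB ⟨hsIcc, hd⟩
      push_neg at hd
      exact hd
    have hIcomem : Ico s₀ t ∈ 𝓝[<] t := Ico_mem_nhdsLT_of_mem ⟨hs₀t, le_refl t⟩
    have hback : ∀ f : ℝ → ℝ, Continuous f → (∀ s ∈ Ico s₀ t, 0 < f s + E s) →
        0 ≤ f t + E t := by
      intro f hf hpos
      have hten : Tendsto (fun s => f s + E s) (𝓝[<] t) (𝓝 (f t + E t)) :=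
        ((hf.add hEcont).continuousAt).continuousWithinAt
      refine ge_of_tendsto hten ?_
      filter_upwards [hIcomem] with s hsm
      exact (hpos s hsm).le
    have slope_le : ∀ (f : ℝ → ℝ) (D : ℝ), HasDerivAt f D t →
        (∀ s ∈ Ico s₀ t, 0 ≤ f s) → f t = 0 → D ≤ 0 := by
      intro f D hD hpos hft
      have h6 := hD.hasDerivWithinAt (s := Iio t)
      rw [hasDerivWithinAt_iff_tendsto_slope] at h6
      rw [Set.diff_singleton_eq_self (by simp)] at h6
      refine le_of_tendsto h6 ?_
      filter_upwards [hIcomem] with s hsm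
      rw [slope_def_field, hft]
      exact div_nonpos_of_nonneg_of_nonpos (by linarith [hpos s hsm]) (by linarith [hsm.2])
    have hbp : 0 ≤ p t + E t := hback p hcp (fun s h => (hlow s h).1)
    have hbv : 0 ≤ v t + E t := hback v hcv (fun s h => (hlow s h).2.1)
    have hbξ : 0 ≤ ξ t + E t := hback ξ hcξ (fun s h => (hlow s h).2.2.1)
    have hbη : 0 ≤ η t + E t := hback η hcη (fun s h => (hlow s h).2.2.2)
    set δ := E t with hδ
    have hδpos : 0 < δ := hEpos t
    have hKE : ε * (K * exp (K*(t-s₀))) = K * δ := by rw [hδ, hE]; ring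
    have hMp := (hMb t ht01).1
    have hMv := (hMb t ht01).2.1
    have hMξ := (hMb t ht01).2.2.1
    have hMη := (hMb t ht01).2.2.2
    rcases htB.2 with hcase | hcase | hcase | hcase
    · have hft : p t + E t = 0 := le_antisymm hcase hbp
      have hD := slope_le (fun s => p s + E s) (v t + ε * (K * exp (K*(t-s₀))))
        ((hdp t).add (hEd ε t)) (fun s h => (hlow s h).1.le) hft
      rw [hKE] at hD
      have hposA : 0 < M^2*δ := by positivity
      have hKδ : K*δ = 100*(M^2*δ) + 100*δ := by rw [hK]; ring
      linarith [hD, hbv, hδpos, hKδ, hposA]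
    · have hft : v t + E t = 0 := le_antisymm hcase hbv
      have hD := slope_le (fun s => v s + E s) ((3 * p t + ξ t) + ε * (K * exp (K*(t-s₀))))
        ((hdv t).add (hEd ε t)) (fun s h => (hlow s h).2.1.le) hft
      rw [hKE] at hD
      have hposA : 0 < M^2*δ := by positivity
      have hKδ : K*δ = 100*(M^2*δ) + 100*δ := by rw [hK]; ring
      linarith [hD, hbp, hbξ, hδpos, hKδ, hposA]
    · have hft : ξ t + E t = 0 := le_antisymm hcase hbξ
      have hD := slope_le (fun s => ξ s + E s) (η t + ε * (K * exp (K*(t-s₀))))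
        ((hdξ t).add (hEd ε t)) (fun s h => (hlow s h).2.2.1.le) hft
      rw [hKE] at hD
      have hposA : 0 < M^2*δ := by positivity
      have hKδ : K*δ = 100*(M^2*δ) + 100*δ := by rw [hK]; ring
      linarith [hD, hbη, hδpos, hKδ, hposA]
    · have hft : η t + E t = 0 := le_antisymm hcase hbη
      have hD := slope_le (fun s => η s + E s)
        ((6*(v t)^2 + 4*cos (2*p t) + 6) * ξ t - 2*η t + Qf (p t) (v t) + ε * (K * exp (K*(t-s₀))))
        ((hdη t ht01).add (hEd ε t)) (fun s h => (hlow s h).2.2.2.le) hft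
      rw [hKE] at hD
      have hηt : η t = -δ := by linarith
      have hδM : δ ≤ M := by
        have := (abs_le.1 hMη).1
        linarith
      have hQ := Qf_lower hM1 hδpos.le hδM hMp hMv (by linarith [(abs_le.1 hMp).1, hbp] : -δ ≤ p t)
        (by linarith [(abs_le.1 hMv).1, hbv] : -δ ≤ v t)
      have hc2 : 2 ≤ 6*(v t)^2 + 4*cos (2*p t) + 6 := by
        nlinarith [sq_nonneg (v t), Real.neg_one_le_cos (2*p t)]
      have hcM : 6*(v t)^2 + 4*cos (2*p t) + 6 ≤ 6*M^2 + 10 := by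
        have := (abs_le.1 hMv)
        nlinarith [Real.cos_le_one (2*p t)]
      have hterm1 : 0 ≤ (6*(v t)^2 + 4*cos (2*p t) + 6)*(ξ t + δ) :=
        mul_nonneg (by linarith) (by linarith)
      have hterm2 : 0 ≤ (6*M^2 + 10 - (6*(v t)^2 + 4*cos (2*p t) + 6))*δ :=
        mul_nonneg (by linarith) hδpos.le
      have hcξl : -(6*M^2+10)*δ ≤ (6*(v t)^2 + 4*cos (2*p t) + 6) * ξ t := by
        linarith [hterm1, hterm2]
      have hposA : 0 < M^2*δ := by positivity
      have hKδ : K*δ = 100*(M^2*δ) + 100*δ := by rw [hK]; ring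
      linarith [hD, hQ, hcξl, hδpos, hposA, hKδ]
  -- conclude
  intro s hsm
  have hexp : 0 < exp (K*(s-s₀)) := exp_pos _
  refine ⟨?_, ?_, ?_, ?_⟩ <;> by_contra hneg <;> push_neg at hneg
  · have hk := (key ((-(p s))/(2*exp (K*(s-s₀)))) (div_pos (by linarith) (by positivity)) s hsm).1
    rw [div_mul_eq_mul_div, mul_comm] at hk
    have : exp (K*(s-s₀)) * (-(p s)) / (2*exp (K*(s-s₀))) = -(p s)/2 := by
      field_simp
    rw [this] at hk; linarith
  · have hk := (key ((-(v s))/(2*exp (K*(s-s₀)))) (div_pos (by linarith) (by positivity)) s hsm).2.1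
    rw [div_mul_eq_mul_div, mul_comm] at hk
    have : exp (K*(s-s₀)) * (-(v s)) / (2*exp (K*(s-s₀))) = -(v s)/2 := by
      field_simp
    rw [this] at hk; linarith
  · have hk := (key ((-(ξ s))/(2*exp (K*(s-s₀)))) (div_pos (by linarith) (by positivity)) s hsm).2.2.1
    rw [div_mul_eq_mul_div, mul_comm] at hk
    have : exp (K*(s-s₀)) * (-(ξ s)) / (2*exp (K*(s-s₀))) = -(ξ s)/2 := by
      field_simp
    rw [this] at hk; linarith
  · have hk := (key ((-(η s))/(2*exp (K*(s-s₀)))) (div_pos (by linarith) (by positivity)) s hsm).2.2.2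
    rw [div_mul_eq_mul_div, mul_comm] at hk
    have : exp (K*(s-s₀)) * (-(η s)) / (2*exp (K*(s-s₀))) = -(η s)/2 := by
      field_simp
    rw [this] at hk; linarith

lemma orthant_strict (s₀ s₁ : ℝ) (hs : s₀ < s₁) (p v ξ η : ℝ → ℝ)
    (hcp : Continuous p) (hcv : Continuous v) (hcξ : Continuous ξ) (hcη : Continuous η)
    (hdp : ∀ s, HasDerivAt p (v s) s)
    (hdv : ∀ s, HasDerivAt v (3 * p s + ξ s) s)
    (hdξ : ∀ s, HasDerivAt ξ (η s) s)
    (hdη : ∀ s ∈ Icc s₀ s₁, HasDerivAt η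
      ((6*(v s)^2 + 4*cos (2*p s) + 6) * ξ s - 2*η s + Qf (p s) (v s)) s)
    (hnn : ∀ s ∈ Icc s₀ s₁, 0 ≤ p s ∧ 0 ≤ v s ∧ 0 ≤ ξ s ∧ 0 ≤ η s)
    (hpos : 0 < p s₀ ∨ 0 < v s₀ ∨ 0 < ξ s₀ ∨ 0 < η s₀) :
    ∀ s ∈ Ioc s₀ s₁, 0 < p s ∧ 0 < v s ∧ 0 < ξ s ∧ 0 < η s := by
  have hsub : Ioo s₀ s₁ ⊆ Icc s₀ s₁ := Ioo_subset_Icc_self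
  have hsub2 : Ioc s₀ s₁ ⊆ Icc s₀ s₁ := Ioc_subset_Icc_self
  have hmem₀ : s₀ ∈ Icc s₀ s₁ := ⟨le_refl _, hs.le⟩
  have mono_aux : ∀ (f g : ℝ → ℝ), ContinuousOn f (Icc s₀ s₁) →
      (∀ x ∈ Ioo s₀ s₁, HasDerivAt f (g x) x) →
      (∀ x ∈ Ioo s₀ s₁, 0 ≤ g x) → MonotoneOn f (Icc s₀ s₁) := by
    intro f g hc hd hg
    apply monotoneOn_of_deriv_nonneg (convex_Icc _ _) hc
    · intro x hx; rw [interior_Icc] at hx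
      exact (hd x hx).differentiableAt.differentiableWithinAt
    · intro x hx; rw [interior_Icc] at hx
      rw [(hd x hx).deriv]; exact hg x hx
  have strict_aux : ∀ (f g : ℝ → ℝ), ContinuousOn f (Icc s₀ s₁) →
      (∀ x ∈ Ioo s₀ s₁, HasDerivAt f (g x) x) →
      (∀ x ∈ Ioo s₀ s₁, 0 < g x) → StrictMonoOn f (Icc s₀ s₁) := by
    intro f g hc hd hg
    apply strictMonoOn_of_deriv_pos (convex_Icc _ _) hc
    intro x hx; rw [interior_Icc] at hx
    rw [(hd x hx).deriv]; exact hg x hx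
  set F : ℝ → ℝ := fun t => exp (2*t) * η t with hF
  have hFc : Continuous F := by fun_prop
  have hFd : ∀ x ∈ Icc s₀ s₁, HasDerivAt F
      (exp (2*x) * ((6*(v x)^2 + 4*cos (2*p x) + 6) * ξ x + Qf (p x) (v x))) x := by
    intro x hx
    have h0 : HasDerivAt (fun t : ℝ => 2*t) 2 x := by simpa using (hasDerivAt_id x).const_mul 2
    have h1 : HasDerivAt (fun t : ℝ => exp (2*t)) (2*exp (2*x)) x := by
      simpa [mul_comm, Function.comp_def] using (Real.hasDerivAt_exp _).comp x h0
    exact (h1.mul (hdη x hx)).congr_deriv (by ring)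
  have chainB : (∀ x ∈ Ioo s₀ s₁, 0 < (6*(v x)^2 + 4*cos (2*p x) + 6) * ξ x + Qf (p x) (v x)) →
      ∀ s ∈ Ioc s₀ s₁, 0 < ξ s ∧ 0 < η s := by
    intro hQpos
    have hFs : StrictMonoOn F (Icc s₀ s₁) :=
      strict_aux F _ hFc.continuousOn (fun x hx => hFd x (hsub hx))
        (fun x hx => mul_pos (exp_pos _) (hQpos x hx))
    have hη : ∀ s ∈ Ioc s₀ s₁, 0 < η s := by
      intro s hsm
      have h1 : F s₀ < F s := hFs hmem₀ (hsub2 hsm) hsm.1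
      have h2 : 0 ≤ F s₀ := mul_nonneg (exp_pos _).le (hnn s₀ hmem₀).2.2.2
      have h3 : 0 < exp (2*s) * η s := lt_of_le_of_lt h2 h1
      by_contra hle
      push_neg at hle
      nlinarith [mul_nonneg (exp_pos (2*s)).le (neg_nonneg.2 hle), h3]
    have hξs : StrictMonoOn ξ (Icc s₀ s₁) :=
      strict_aux ξ η hcξ.continuousOn (fun x _ => hdξ x)
        (fun x hx => hη x ⟨hx.1, hx.2.le⟩)
    intro s hsm
    have h1 : ξ s₀ < ξ s := hξs hmem₀ (hsub2 hsm) hsm.1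
    exact ⟨lt_of_le_of_lt (hnn s₀ hmem₀).2.2.1 h1, hη s hsm⟩
  have chainC : (∀ s ∈ Ioc s₀ s₁, 0 < ξ s) → ∀ s ∈ Ioc s₀ s₁, 0 < p s ∧ 0 < v s := by
    intro hξpos
    have hvs : StrictMonoOn v (Icc s₀ s₁) :=
      strict_aux v _ hcv.continuousOn (fun x _ => hdv x)
        (fun x hx => by
          have h1 := (hnn x (hsub hx)).1
          have h2 := hξpos x ⟨hx.1, hx.2.le⟩
          linarith)
    have hv : ∀ s ∈ Ioc s₀ s₁, 0 < v s := by
      intro s hsm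
      exact lt_of_le_of_lt (hnn s₀ hmem₀).2.1 (hvs hmem₀ (hsub2 hsm) hsm.1)
    have hps : StrictMonoOn p (Icc s₀ s₁) :=
      strict_aux p v hcp.continuousOn (fun x _ => hdp x)
        (fun x hx => hv x ⟨hx.1, hx.2.le⟩)
    intro s hsm
    exact ⟨lt_of_le_of_lt (hnn s₀ hmem₀).1 (hps hmem₀ (hsub2 hsm) hsm.1), hv s hsm⟩
  have hcnonneg : ∀ x ∈ Icc s₀ s₁, (0:ℝ) ≤ 6*(v x)^2 + 4*cos (2*p x) + 6 := by
    intro x hx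
    nlinarith [sq_nonneg (v x), Real.neg_one_le_cos (2*p x)]
  rcases hpos with hp0 | hv0 | hξ0 | hη0
  · -- p s₀ > 0
    have hmono : MonotoneOn p (Icc s₀ s₁) :=
      mono_aux p v hcp.continuousOn (fun x _ => hdp x) (fun x hx => (hnn x (hsub hx)).2.1)
    have hpall : ∀ x ∈ Icc s₀ s₁, 0 < p x :=
      fun x hx => lt_of_lt_of_le hp0 (hmono hmem₀ hx hx.1)
    have hQpos : ∀ x ∈ Ioo s₀ s₁, 0 < (6*(v x)^2 + 4*cos (2*p x) + 6) * ξ x + Qf (p x) (v x) := by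
      intro x hx
      have h1 := mul_nonneg (hcnonneg x (hsub hx)) (hnn x (hsub hx)).2.2.1
      have h2 := Qf_pos (hpall x (hsub hx)).le (hnn x (hsub hx)).2.1 (Or.inl (hpall x (hsub hx)))
      linarith
    have hBξη := chainB hQpos
    have hCpv := chainC (fun s hsm => (hBξη s hsm).1)
    exact fun s hsm => ⟨(hCpv s hsm).1, (hCpv s hsm).2, (hBξη s hsm).1, (hBξη s hsm).2⟩
  · -- v s₀ > 0
    have hmono : MonotoneOn v (Icc s₀ s₁) :=
      mono_aux v _ hcv.continuousOn (fun x _ => hdv x)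
        (fun x hx => by have h1 := (hnn x (hsub hx)).1; have h2 := (hnn x (hsub hx)).2.2.1; linarith)
    have hvall : ∀ x ∈ Icc s₀ s₁, 0 < v x :=
      fun x hx => lt_of_lt_of_le hv0 (hmono hmem₀ hx hx.1)
    have hQpos : ∀ x ∈ Ioo s₀ s₁, 0 < (6*(v x)^2 + 4*cos (2*p x) + 6) * ξ x + Qf (p x) (v x) := by
      intro x hx
      have h1 := mul_nonneg (hcnonneg x (hsub hx)) (hnn x (hsub hx)).2.2.1
      have h2 := Qf_pos (hnn x (hsub hx)).1 (hvall x (hsub hx)).le (Or.inr (hvall x (hsub hx)))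
      linarith
    have hBξη := chainB hQpos
    have hCpv := chainC (fun s hsm => (hBξη s hsm).1)
    exact fun s hsm => ⟨(hCpv s hsm).1, (hCpv s hsm).2, (hBξη s hsm).1, (hBξη s hsm).2⟩
  · -- ξ s₀ > 0
    have hmono : MonotoneOn ξ (Icc s₀ s₁) :=
      mono_aux ξ η hcξ.continuousOn (fun x _ => hdξ x) (fun x hx => (hnn x (hsub hx)).2.2.2)
    have hξall : ∀ x ∈ Icc s₀ s₁, 0 < ξ x :=
      fun x hx => lt_of_lt_of_le hξ0 (hmono hmem₀ hx hx.1)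
    have hQpos : ∀ x ∈ Ioo s₀ s₁, 0 < (6*(v x)^2 + 4*cos (2*p x) + 6) * ξ x + Qf (p x) (v x) := by
      intro x hx
      have h2 := Qf_nonneg (hnn x (hsub hx)).1 (hnn x (hsub hx)).2.1
      have hc2 : (2:ℝ) ≤ 6*(v x)^2 + 4*cos (2*p x) + 6 := by
        nlinarith [sq_nonneg (v x), Real.neg_one_le_cos (2*p x)]
      nlinarith [mul_pos (lt_of_lt_of_le two_pos hc2) (hξall x (hsub hx))]
    have hBξη := chainB hQpos
    have hCpv := chainC (fun s hsm => (hBξη s hsm).1)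
    exact fun s hsm => ⟨(hCpv s hsm).1, (hCpv s hsm).2, (hBξη s hsm).1, (hBξη s hsm).2⟩
  · -- η s₀ > 0
    have hmonoF : MonotoneOn F (Icc s₀ s₁) :=
      mono_aux F _ hFc.continuousOn (fun x hx => hFd x (hsub hx))
        (fun x hx => mul_nonneg (exp_pos _).le
          (by
            have h1 := mul_nonneg (hcnonneg x (hsub hx)) (hnn x (hsub hx)).2.2.1
            have h2 := Qf_nonneg (hnn x (hsub hx)).1 (hnn x (hsub hx)).2.1
            linarith))
    have hηall : ∀ x ∈ Icc s₀ s₁, 0 < η x := by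
      intro x hx
      have h1 : F s₀ ≤ F x := hmonoF hmem₀ hx hx.1
      have h2 : 0 < F s₀ := mul_pos (exp_pos _) hη0
      have h3 : 0 < exp (2*x) * η x := lt_of_lt_of_le h2 h1
      by_contra hle
      push_neg at hle
      nlinarith [mul_nonneg (exp_pos (2*x)).le (neg_nonneg.2 hle), h3]
    have hξs : StrictMonoOn ξ (Icc s₀ s₁) :=
      strict_aux ξ η hcξ.continuousOn (fun x _ => hdξ x) (fun x hx => hηall x (hsub hx))
    have hξpos : ∀ s ∈ Ioc s₀ s₁, 0 < ξ s := fun s hsm =>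
      lt_of_le_of_lt (hnn s₀ hmem₀).2.2.1 (hξs hmem₀ (hsub2 hsm) hsm.1)
    have hCpv := chainC hξpos
    exact fun s hsm => ⟨(hCpv s hsm).1, (hCpv s hsm).2, hξpos s hsm, hηall s (hsub2 hsm)⟩

end BihAux

theorem stmt_16 (s₀ s₁ : ℝ) (hs : s₀ < s₁) (φ : ℝ → ℝ) (hφ : ContDiff ℝ 4 φ)
    (hODE : SolvesBiharmODE5 φ (Set.Icc s₀ s₁))
    (ξ : ℝ → ℝ) (hξ : ξ = fun s => iteratedDeriv 2 φ s - 3 * φ s)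
    (h1 : 0 ≤ φ s₀) (h2 : 0 ≤ deriv φ s₀) (h3 : 0 ≤ ξ s₀) (h4 : 0 ≤ deriv ξ s₀) :
    (∀ s ∈ Set.Icc s₀ s₁, 0 ≤ φ s ∧ 0 ≤ deriv φ s ∧ 0 ≤ ξ s ∧ 0 ≤ deriv ξ s) ∧
    ((0 < φ s₀ ∨ 0 < deriv φ s₀ ∨ 0 < ξ s₀ ∨ 0 < deriv ξ s₀) →
      ∀ s ∈ Set.Ioc s₀ s₁, 0 < φ s ∧ 0 < deriv φ s ∧ 0 < ξ s ∧ 0 < deriv ξ s) := by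
  have hODE' := hODE
  unfold SolvesBiharmODE5 at hODE'
  have hc3 : ContDiff ℝ 3 (deriv φ) := by
    have := ContDiff.iterate_deriv' 3 1 (f := φ) (by exact_mod_cast hφ)
    simpa using this
  have hc2 : ContDiff ℝ 2 (iteratedDeriv 2 φ) := by
    have := ContDiff.iterate_deriv' 2 2 (f := φ) (by exact_mod_cast hφ)
    simpa [iteratedDeriv_eq_iterate] using this
  have hc1 : ContDiff ℝ 1 (iteratedDeriv 3 φ) := by
    have := ContDiff.iterate_deriv' 1 3 (f := φ) (by exact_mod_cast hφ)
    simpa [iteratedDeriv_eq_iterate] using this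
  have hφd : ∀ s, HasDerivAt φ (deriv φ s) s := fun s =>
    ((hφ.differentiable (by norm_num)) s).hasDerivAt
  have hd2 : deriv (deriv φ) = iteratedDeriv 2 φ := by
    rw [show (2:ℕ) = 1+1 from rfl, iteratedDeriv_succ, iteratedDeriv_one]
  have hd3 : deriv (iteratedDeriv 2 φ) = iteratedDeriv 3 φ :=
    (iteratedDeriv_succ (n := 2)).symm
  have hd4 : deriv (iteratedDeriv 3 φ) = iteratedDeriv 4 φ :=
    (iteratedDeriv_succ (n := 3)).symm
  have hvd : ∀ s, HasDerivAt (deriv φ) (3 * φ s + ξ s) s := by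
    intro s
    have h := ((hc3.differentiable (by norm_num)) s).hasDerivAt
    rw [hd2] at h
    have he : iteratedDeriv 2 φ s = 3 * φ s + ξ s := by rw [hξ]; ring
    rwa [he] at h
  have hξd' : ∀ s, HasDerivAt ξ (iteratedDeriv 3 φ s - 3 * deriv φ s) s := by
    intro s
    rw [hξ]
    have h1 := ((hc2.differentiable (by norm_num)) s).hasDerivAt
    rw [hd3] at h1
    exact h1.sub ((hφd s).const_mul 3)
  have hη_eq : ∀ s, deriv ξ s = iteratedDeriv 3 φ s - 3 * deriv φ s := fun s => (hξd' s).deriv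
  have hξd : ∀ s, HasDerivAt ξ (deriv ξ s) s := fun s => (hη_eq s) ▸ hξd' s
  have hηfun : deriv ξ = fun t => iteratedDeriv 3 φ t - 3 * deriv φ t := funext hη_eq
  have hηd' : ∀ s, HasDerivAt (deriv ξ) (iteratedDeriv 4 φ s - 3 * iteratedDeriv 2 φ s) s := by
    intro s
    rw [hηfun]
    have h1 := ((hc1.differentiable (by norm_num)) s).hasDerivAt
    rw [hd4] at h1
    have h2 := ((hc3.differentiable (by norm_num)) s).hasDerivAt
    rw [hd2] at h2
    exact h1.sub (h2.const_mul 3)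
  have hηd : ∀ s ∈ Set.Icc s₀ s₁, HasDerivAt (deriv ξ)
      ((6*(deriv φ s)^2 + 4*cos (2*φ s) + 6) * ξ s - 2*deriv ξ s + Qf (φ s) (deriv φ s)) s := by
    intro s hmem
    have h := hηd' s
    have h2 : iteratedDeriv 2 φ s = 3 * φ s + ξ s := by rw [hξ]; ring
    have h3 : iteratedDeriv 3 φ s = deriv ξ s + 3 * deriv φ s := by rw [hη_eq s]; ring
    have key : iteratedDeriv 4 φ s - 3 * iteratedDeriv 2 φ s
        = (6*(deriv φ s)^2 + 4*cos (2*φ s) + 6) * ξ s - 2*deriv ξ s + Qf (φ s) (deriv φ s) := by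
      rw [hODE' s hmem, h2, h3, Qf]
      rw [Real.cos_sq (φ s)]
      ring
    rwa [key] at h
  have hcφ : Continuous φ := hφ.continuous
  have hcv : Continuous (deriv φ) := hc3.continuous
  have hcξ : Continuous ξ := by
    rw [hξ]; exact hc2.continuous.sub (continuous_const.mul hcφ)
  have hcη : Continuous (deriv ξ) := by
    rw [hηfun]; exact hc1.continuous.sub (continuous_const.mul hcv)
  have hnn := orthant s₀ s₁ hs φ (deriv φ) ξ (deriv ξ) hcφ hcv hcξ hcη hφd hvd hξd hηd h1 h2 h3 h4
  refine ⟨hnn, fun hpos => ?_⟩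
  exact orthant_strict s₀ s₁ hs φ (deriv φ) ξ (deriv ξ) hcφ hcv hcξ hcη hφd hvd hξd hηd hnn hpos
end
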